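/- Any pointed cube path in a higher-dimensional automaton i : * → X is homotopic to a fan-shaped cube path. -/

import Mathlib

set_option autoImplicit false

/-- A precubical set: a graded set with face maps `δ_k^ν` (ν encoded as `Bool`,
`false` = lower face `δ^0`, `true` = upper face `δ^1`; indices are 0-based)
satisfying the precubical identity. -/
structure PCSet : Type 1 where
  cube : ℕ → Type
  face : ∀ {n : ℕ}, Bool → Fin (n + 1) → cube (n + 1) → cube n
  precub : ∀ {n : ℕ} (ν μ : Bool) (k l : ℕ) (hk : k < n + 1) (hl : l < n + 2)
      (_ : k < l) (x : cube (n + 2)),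
      face ν ⟨k, hk⟩ (face μ ⟨l, hl⟩ x) =
        face μ ⟨l - 1, by omega⟩ (face ν ⟨k, by omega⟩ x)

namespace PCSet

/-- A cube of arbitrary dimension. -/
abbrev Cell (X : PCSet) : Type := Σ n : ℕ, X.cube n

/-- One step of a cube path: either `x = δ_k^0 y` or `y = δ_k^1 x`. -/
def Step (X : PCSet) (x y : X.Cell) : Prop :=
  (∃ (n : ℕ) (k : Fin (n + 1)) (c : X.cube (n + 1)),
      x = ⟨n, X.face false k c⟩ ∧ y = ⟨n + 1, c⟩) ∨
  (∃ (n : ℕ) (k : Fin (n + 1)) (c : X.cube (n + 1)),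
      x = ⟨n + 1, c⟩ ∧ y = ⟨n, X.face true k c⟩)

/-- A cube path: a nonempty sequence of cubes, consecutive ones related by `Step`. -/
def IsCubePath (X : PCSet) (l : List X.Cell) : Prop :=
  l ≠ [] ∧ l.Chain' X.Step

/-- Adjacency condition (1): `x_{p−1} = δ_k^0 x_p`, `x_p = δ_ℓ^0 x_{p+1}`,
`y_{p−1} = δ_{ℓ−1}^0 y_p`, `y_p = δ_k^0 y_{p+1}`, `k < ℓ`.
Here `a = x_{p-1} = y_{p-1}`, `b = x_p`, `b' = y_p`, `c = x_{p+1} = y_{p+1}`. -/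
def Adj1 (X : PCSet) (a b b' c : X.Cell) : Prop :=
  ∃ (n k l : ℕ) (hk : k < n + 1) (hl : l < n + 2) (_ : k < l) (u : X.cube (n + 2)),
    c = ⟨n + 2, u⟩ ∧
    b = ⟨n + 1, X.face false ⟨l, hl⟩ u⟩ ∧
    b' = ⟨n + 1, X.face false ⟨k, by omega⟩ u⟩ ∧
    a = ⟨n, X.face false ⟨k, hk⟩ (X.face false ⟨l, hl⟩ u)⟩ ∧
    a = ⟨n, X.face false ⟨l - 1, by omega⟩ (X.face false ⟨k, by omega⟩ u)⟩

/-- Adjacency condition (2): `x_p = δ_k^1 x_{p−1}`, `x_{p+1} = δ_ℓ^1 x_p`,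
`y_p = δ_{ℓ−1}^1 y_{p−1}`, `y_{p+1} = δ_k^1 y_p`, `k < ℓ`. -/
def Adj2 (X : PCSet) (a b b' c : X.Cell) : Prop :=
  ∃ (n k l : ℕ) (hk : k < n + 2) (hl : l < n + 1) (_ : k < l) (u : X.cube (n + 2)),
    a = ⟨n + 2, u⟩ ∧
    b = ⟨n + 1, X.face true ⟨k, hk⟩ u⟩ ∧
    b' = ⟨n + 1, X.face true ⟨l - 1, by omega⟩ u⟩ ∧
    c = ⟨n, X.face true ⟨l, hl⟩ (X.face true ⟨k, hk⟩ u)⟩ ∧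
    c = ⟨n, X.face true ⟨k, by omega⟩ (X.face true ⟨l - 1, by omega⟩ u)⟩

/-- Adjacency condition (3): `x_p = δ_k^0 δ_ℓ^1 y_p`, `y_{p−1} = δ_k^0 y_p`,
`y_{p+1} = δ_ℓ^1 y_p`, `k < ℓ`. -/
def Adj3 (X : PCSet) (a b b' c : X.Cell) : Prop :=
  ∃ (n k l : ℕ) (hk : k < n + 1) (hl : l < n + 2) (_ : k < l) (u : X.cube (n + 2)),
    b' = ⟨n + 2, u⟩ ∧
    b = ⟨n, X.face false ⟨k, hk⟩ (X.face true ⟨l, hl⟩ u)⟩ ∧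
    a = ⟨n + 1, X.face false ⟨k, by omega⟩ u⟩ ∧
    c = ⟨n + 1, X.face true ⟨l, hl⟩ u⟩

/-- Adjacency condition (4): `x_p = δ_k^1 δ_ℓ^0 y_p`, `y_{p−1} = δ_ℓ^0 y_p`,
`y_{p+1} = δ_k^1 y_p`, `k < ℓ`. -/
def Adj4 (X : PCSet) (a b b' c : X.Cell) : Prop :=
  ∃ (n k l : ℕ) (hk : k < n + 1) (hl : l < n + 2) (_ : k < l) (u : X.cube (n + 2)),
    b' = ⟨n + 2, u⟩ ∧
    b = ⟨n, X.face true ⟨k, hk⟩ (X.face false ⟨l, hl⟩ u)⟩ ∧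
    a = ⟨n + 1, X.face false ⟨l, hl⟩ u⟩ ∧
    c = ⟨n + 1, X.face true ⟨k, by omega⟩ u⟩

/-- One of the four adjacency conditions holds, possibly with the roles of the
two paths exchanged. -/
def AdjMid (X : PCSet) (a b b' c : X.Cell) : Prop :=
  Adj1 X a b b' c ∨ Adj2 X a b b' c ∨ Adj3 X a b b' c ∨ Adj4 X a b b' c ∨
  Adj1 X a b' b c ∨ Adj2 X a b' b c ∨ Adj3 X a b' b c ∨ Adj4 X a b' b c

/-- Two cube paths are adjacent: they agree everywhere except at exactly one
(interior) index `p`, where one of the four exchange conditions holds. -/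
def Adjacent (X : PCSet) (l₁ l₂ : List X.Cell) : Prop :=
  X.IsCubePath l₁ ∧ X.IsCubePath l₂ ∧ l₁.length = l₂.length ∧
  ∃ p : ℕ, 0 < p ∧ p + 1 < l₁.length ∧
    (∀ q : ℕ, q ≠ p → l₁[q]? = l₂[q]?) ∧
    l₁[p]? ≠ l₂[p]? ∧
    ∃ a b b' c : X.Cell,
      l₁[p - 1]? = some a ∧ l₁[p]? = some b ∧ l₂[p]? = some b' ∧
      l₁[p + 1]? = some c ∧ X.AdjMid a b b' c

/-- Homotopy of cube paths: the reflexive-transitive closure of adjacency. -/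
def Homotopic (X : PCSet) : List X.Cell → List X.Cell → Prop :=
  Relation.ReflTransGen X.Adjacent

/-- Iterated application of face maps, parameters in application order. -/
inductive IterFace (X : PCSet) : X.Cell → List (ℕ × Bool) → X.Cell → Prop
  | nil (c : X.Cell) : IterFace X c [] c
  | cons {n : ℕ} (ν : Bool) (k : Fin (n + 1)) (c : X.cube (n + 1)) {l : List (ℕ × Bool)}
      {res : X.Cell} :
      IterFace X ⟨n, X.face ν k c⟩ l res →
      IterFace X ⟨n + 1, c⟩ ((k.1, ν) :: l) res

/-- `p` is obtained from `c` as `δ_{k_1}^{ν_1}⋯δ_{k_q}^{ν_q} c` where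
`k_1 < ⋯ < k_q` (in application order, the index list `ks` is strictly
decreasing). -/
def RepGen (X : PCSet) (c p : X.Cell) (ks : List ℕ) : Prop :=
  List.Pairwise (· > ·) ks ∧
  ∃ νs : List Bool, νs.length = ks.length ∧ IterFace X c (ks.zip νs) p

/-- `l` is a representing sequence for a precubical path object. -/
def IsRep (X : PCSet) (l : List X.Cell) : Prop :=
  l ≠ [] ∧ l.Nodup ∧ l.Chain' X.Step ∧
  ∀ p : X.Cell, ∃ c ∈ l, (∃ ks, RepGen X c p ks) ∧
    ∀ ks₁ ks₂ : List ℕ, RepGen X c p ks₁ → RepGen X c p ks₂ → ks₁ = ks₂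

/-- Morphisms of precubical sets. -/
structure Hom (X Y : PCSet) where
  map : ∀ n : ℕ, X.cube n → Y.cube n
  comm : ∀ (n : ℕ) (ν : Bool) (k : Fin (n + 1)) (x : X.cube (n + 1)),
    map n (X.face ν k x) = Y.face ν k (map (n + 1) x)

def Hom.id (X : PCSet) : Hom X X where
  map _ x := x
  comm _ _ _ _ := rfl

def Hom.comp {X Y Z : PCSet} (g : Hom Y Z) (f : Hom X Y) : Hom X Z where
  map n x := g.map n (f.map n x)
  comm n ν k x := by simp only [f.comm, g.comm]

def Hom.cell {X Y : PCSet} (f : Hom X Y) (x : X.Cell) : Y.Cell := ⟨x.1, f.map x.1 x.2⟩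

/-- `R` is a precubical subset of the product `X × Y`. -/
def PrecubRel (X Y : PCSet) (R : Set (X.Cell × Y.Cell)) : Prop :=
  (∀ p ∈ R, p.1.1 = p.2.1) ∧
  ∀ (n : ℕ) (x : X.cube (n + 1)) (y : Y.cube (n + 1)),
    ((⟨n + 1, x⟩, ⟨n + 1, y⟩) : X.Cell × Y.Cell) ∈ R →
    ∀ (ν : Bool) (k : Fin (n + 1)),
      ((⟨n, X.face ν k x⟩, ⟨n, Y.face ν k y⟩) : X.Cell × Y.Cell) ∈ R

/-- One-step bisimulation via a precubical relation (condition (2) of Thm 3.4). -/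
def OneStepBisim (X Y : PCSet) (bx : X.Cell) (by' : Y.Cell) : Prop :=
  ∃ R : Set (X.Cell × Y.Cell), PrecubRel X Y R ∧ (bx, by') ∈ R ∧
    ∀ (n : ℕ) (x₁ : X.cube n) (y₁ : Y.cube n),
      ((⟨n, x₁⟩, ⟨n, y₁⟩) : X.Cell × Y.Cell) ∈ R →
      (∀ (x₂ : X.cube (n + 1)) (k : Fin (n + 1)), x₁ = X.face false k x₂ →
        ∃ y₂ : Y.cube (n + 1), y₁ = Y.face false k y₂ ∧
          ((⟨n + 1, x₂⟩, ⟨n + 1, y₂⟩) : X.Cell × Y.Cell) ∈ R) ∧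
      (∀ (y₂ : Y.cube (n + 1)) (k : Fin (n + 1)), y₁ = Y.face false k y₂ →
        ∃ x₂ : X.cube (n + 1), x₁ = X.face false k x₂ ∧
          ((⟨n + 1, x₂⟩, ⟨n + 1, y₂⟩) : X.Cell × Y.Cell) ∈ R)

/-- Cube-path matching bisimulation (condition (3) of Thm 3.4). -/
def PathBisim (X Y : PCSet) (bx : X.Cell) (by' : Y.Cell) : Prop :=
  ∃ R : Set (X.Cell × Y.Cell), PrecubRel X Y R ∧ (bx, by') ∈ R ∧
    ∀ (x₁ : X.Cell) (y₁ : Y.Cell), (x₁, y₁) ∈ R →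
      (∀ lx : List X.Cell, X.IsCubePath lx → lx.head? = some x₁ →
        ∃ ly : List Y.Cell, Y.IsCubePath ly ∧ ly.head? = some y₁ ∧
          ly.length = lx.length ∧ ∀ pr ∈ lx.zip ly, pr ∈ R) ∧
      (∀ ly : List Y.Cell, Y.IsCubePath ly → ly.head? = some y₁ →
        ∃ lx : List X.Cell, X.IsCubePath lx ∧ lx.head? = some x₁ ∧
          lx.length = ly.length ∧ ∀ pr ∈ lx.zip ly, pr ∈ R)

/-- A fan-shaped cube path: one-dimensional (alternating dimensions 0 and 1)
until it has to build up to its end cube of dimension `n`. -/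
def IsFan (X : PCSet) (l : List X.Cell) : Prop :=
  ∃ (n : ℕ) (c : X.cube n), l.getLast? = some ⟨n, c⟩ ∧
    ∀ (i : ℕ) (hi : i < l.length),
      (i + n + 1 ≤ l.length → (l.get ⟨i, hi⟩).1 = if i % 2 = 0 then 0 else 1) ∧
      (l.length < i + n + 1 → (l.get ⟨i, hi⟩).1 = n + i + 1 - l.length)

/-- The cube path `(x_1, …, x_n, x)` obtained by repeatedly taking lower faces
`x_j = δ_{k_j}^0 ⋯ δ_{k_n}^0 x`, one for each choice of indices `k_j ≤ j`. -/
def lowerChain (X : PCSet) : ∀ (n : ℕ), X.cube n → (∀ j : Fin n, Fin (j.1 + 1)) → List X.Cell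
  | 0, x, _ => [⟨0, x⟩]
  | n + 1, x, ks =>
      lowerChain X n (X.face false (ks ⟨n, Nat.lt_succ_self n⟩) x)
        (fun j => ks ⟨j.1, by omega⟩) ++ [⟨n + 1, x⟩]

end PCSet

open PCSet

/-- A higher-dimensional automaton: a pointed precubical set. -/
structure HDA extends PCSet where
  base : cube 0

/-- Pointed morphisms of higher-dimensional automata. -/
structure HDAHom (X Y : HDA) where
  toHom : Hom X.toPCSet Y.toPCSet
  pointed : toHom.map 0 X.base = Y.base

def HDAHom.id (X : HDA) : HDAHom X X := ⟨Hom.id _, rfl⟩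

def HDAHom.comp {X Y Z : HDA} (g : HDAHom Y Z) (f : HDAHom X Y) : HDAHom X Z :=
  ⟨g.toHom.comp f.toHom, by
    show g.toHom.map 0 (f.toHom.map 0 X.base) = Z.base
    rw [f.pointed, g.pointed]⟩

def HDAHom.IsIso {X Y : HDA} (f : HDAHom X Y) : Prop :=
  ∃ g : HDAHom Y X, g.comp f = HDAHom.id X ∧ f.comp g = HDAHom.id Y

/-- A pointed cube path: a cube path starting in the base point. -/
def HDA.IsPointedPath (X : HDA) (l : List X.toPCSet.Cell) : Prop :=
  X.toPCSet.IsCubePath l ∧ l.head? = some ⟨0, X.base⟩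

/-- A cube is reachable if some pointed cube path ends in it. -/
def HDA.Reachable (X : HDA) (x : X.toPCSet.Cell) : Prop :=
  ∃ l, X.IsPointedPath l ∧ l.getLast? = some x

/-- The type of pointed cube paths of `X` ending in an `n`-cube. -/
def HDA.PPath (X : HDA) (n : ℕ) : Type :=
  { l : List X.toPCSet.Cell //
      X.IsPointedPath l ∧ ∃ c : X.cube n, l.getLast? = some ⟨n, c⟩ }

/-- A pointed precubical path object (object of the category HDP). -/
def HDA.IsPathObj (P : HDA) : Prop :=
  ∃ l, IsRep P.toPCSet l ∧ l.head? = some ⟨0, P.base⟩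

/-- A cube path extension: maps the representation of `P` to an initial segment
of the representation of `Q`. -/
def IsExtension {P Q : HDA} (f : HDAHom P Q) : Prop :=
  ∃ (lp : List P.toPCSet.Cell) (lq : List Q.toPCSet.Cell),
    IsRep P.toPCSet lp ∧ lp.head? = some ⟨0, P.base⟩ ∧
    IsRep Q.toPCSet lq ∧ lq.head? = some ⟨0, Q.base⟩ ∧
    ∃ hle : lp.length ≤ lq.length,
      ∀ (j : ℕ) (hj : j < lp.length),
        f.toHom.cell (lp.get ⟨j, hj⟩) = lq.get ⟨j, lt_of_lt_of_le hj hle⟩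

/-- Morphisms of the category HDP: generated by pointed cube path extensions
and isomorphisms between pointed precubical path objects. -/
inductive IsHDPHom : ∀ {P Q : HDA}, HDAHom P Q → Prop
  | ext {P Q : HDA} (f : HDAHom P Q) :
      P.IsPathObj → Q.IsPathObj → IsExtension f → IsHDPHom f
  | iso {P Q : HDA} (f : HDAHom P Q) :
      P.IsPathObj → Q.IsPathObj → f.IsIso → IsHDPHom f
  | comp {P Q R : HDA} {f : HDAHom P Q} {g : HDAHom Q R} :
      IsHDPHom f → IsHDPHom g → IsHDPHom (g.comp f)

/-- Open maps of HDA: right lifting property with respect to HDP. -/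
def IsOpenHom {X Y : HDA} (f : HDAHom X Y) : Prop :=
  ∀ (P Q : HDA) (g : HDAHom P Q), IsHDPHom g →
    ∀ (p : HDAHom P X) (q : HDAHom Q Y), f.comp p = q.comp g →
      ∃ r : HDAHom Q X, r.comp g = p ∧ f.comp r = q

/-- hd-bisimilarity: a span of open maps. -/
def HdBisimilar (X Y : HDA) : Prop :=
  ∃ (Z : HDA) (f : HDAHom Z X) (g : HDAHom Z Y), IsOpenHom f ∧ IsOpenHom g

/-- A higher-dimensional tree: every cube is the end of exactly one homotopy
class of pointed cube paths. -/
def HDA.IsTree (X : HDA) : Prop :=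
  ∀ x : X.toPCSet.Cell,
    (∃ l, X.IsPointedPath l ∧ l.getLast? = some x) ∧
    ∀ l₁ l₂ : List X.toPCSet.Cell, X.IsPointedPath l₁ → l₁.getLast? = some x →
      X.IsPointedPath l₂ → l₂.getLast? = some x → X.toPCSet.Homotopic l₁ l₂

/-- An unfolding of the HDA `X`: an HDA `Xu` whose `n`-cubes are exactly the
homotopy classes (`cls`) of pointed cube paths of `X` ending in an `n`-cube,
with the face maps, base point and projection of Definition 4.3. -/
structure Unfolding (X : HDA) where
  Xu : HDA
  proj : HDAHom Xu X
  cls : ∀ n : ℕ, X.PPath n → Xu.cube n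
  cls_eq : ∀ (n : ℕ) (a b : X.PPath n),
    cls n a = cls n b ↔ X.toPCSet.Homotopic a.1 b.1
  cls_surj : ∀ (n : ℕ) (x : Xu.cube n), ∃ a, cls n a = x
  cls_base : ∀ a : X.PPath 0, a.1 = [⟨0, X.base⟩] → cls 0 a = Xu.base
  face_true : ∀ (n : ℕ) (k : Fin (n + 1)) (a : X.PPath (n + 1)) (c : X.cube (n + 1)),
    a.1.getLast? = some ⟨n + 1, c⟩ →
    ∀ b : X.PPath n, b.1 = a.1 ++ [⟨n, X.toPCSet.face true k c⟩] →
      Xu.toPCSet.face true k (cls (n + 1) a) = cls n b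
  face_false : ∀ (n : ℕ) (k : Fin (n + 1)) (a : X.PPath (n + 1)) (c : X.cube (n + 1)),
    a.1.getLast? = some ⟨n + 1, c⟩ →
    ∀ b : X.PPath n,
      (Xu.toPCSet.face false k (cls (n + 1) a) = cls n b ↔
        b.1.getLast? = some ⟨n, X.toPCSet.face false k c⟩ ∧
          X.toPCSet.Homotopic (b.1 ++ [⟨n + 1, c⟩]) a.1)
  proj_cls : ∀ (n : ℕ) (a : X.PPath n) (c : X.cube n),
    a.1.getLast? = some ⟨n, c⟩ → proj.toHom.map n (cls n a) = c

/-- The set `δ̃_k^0 [l]` of Definition 4.3: pointed cube paths `l'` with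
`l'` ending in `δ_k^0 c` and `l' * (c) ∼ l`. -/
def predSet (X : HDA) (n : ℕ) (k : Fin (n + 1)) (c : X.cube (n + 1))
    (l : List X.toPCSet.Cell) : Set (List X.toPCSet.Cell) :=
  { l' | X.IsPointedPath l' ∧ l'.getLast? = some ⟨n, X.toPCSet.face false k c⟩ ∧
      X.toPCSet.Homotopic (l' ++ [(⟨n + 1, c⟩ : X.toPCSet.Cell)]) l }

/-- Prefix order on homotopy classes (cubes of an unfolding): some
representatives are prefix-related. -/
def Unfolding.ClassLe {X : HDA} (U : Unfolding X) (c d : U.Xu.toPCSet.Cell) : Prop :=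
  ∃ (a : X.PPath c.1) (b : X.PPath d.1),
    U.cls c.1 a = c.2 ∧ U.cls d.1 b = d.2 ∧ a.1 <+: b.1

/-- `h` is the morphism of unfoldings induced by `g` (i.e. `g̃`). -/
def IsUnfoldMap {X Y : HDA} (UX : Unfolding X) (UY : Unfolding Y)
    (g : HDAHom X Y) (h : HDAHom UX.Xu UY.Xu) : Prop :=
  ∀ (n : ℕ) (a : X.PPath n), ∃ b : Y.PPath n,
    b.1 = a.1.map g.toHom.cell ∧ h.toHom.map n (UX.cls n a) = UY.cls n b

/-- Open maps in the category HDAh: right lifting property with respect to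
HDPh (morphisms of unfoldings corresponding to HDP-morphisms under the
projections). -/
def IsOpenHDAh {X Y : HDA} (UX : Unfolding X) (UY : Unfolding Y)
    (f : HDAHom UX.Xu UY.Xu) : Prop :=
  ∀ (P Q : HDA) (UP : Unfolding P) (UQ : Unfolding Q) (g : HDAHom UP.Xu UQ.Xu),
    (∃ g₀ : HDAHom P Q, IsHDPHom g₀ ∧ UQ.proj.comp g = g₀.comp UP.proj) →
    ∀ (p : HDAHom UP.Xu UX.Xu) (q : HDAHom UQ.Xu UY.Xu),
      f.comp p = q.comp g →
      ∃ r : HDAHom UQ.Xu UX.Xu, r.comp g = p ∧ f.comp r = q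

/-- Homotopy bisimilarity: a span of open maps in HDAh. -/
def HomotopyBisimilar (X Y : HDA) : Prop :=
  ∃ (Z : HDA) (UX : Unfolding X) (UY : Unfolding Y) (UZ : Unfolding Z)
    (f : HDAHom UZ.Xu UX.Xu) (g : HDAHom UZ.Xu UY.Xu),
    IsOpenHDAh UZ UX f ∧ IsOpenHDAh UZ UY g

/-- Prefix-matching bisimulation on unfoldings (condition (4) of Prop 6.5). -/
def PrefixBisim {X Y : HDA} (UX : Unfolding X) (UY : Unfolding Y) : Prop :=
  ∃ R : Set (UX.Xu.toPCSet.Cell × UY.Xu.toPCSet.Cell),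
    PrecubRel UX.Xu.toPCSet UY.Xu.toPCSet R ∧
    ((⟨0, UX.Xu.base⟩, ⟨0, UY.Xu.base⟩) : _ × _) ∈ R ∧
    ∀ (c : UX.Xu.toPCSet.Cell) (d : UY.Xu.toPCSet.Cell), (c, d) ∈ R →
      (∀ c₂, UX.ClassLe c c₂ → ∃ d₂, UY.ClassLe d d₂ ∧ (c₂, d₂) ∈ R) ∧
      (∀ d₂, UY.ClassLe d d₂ → ∃ c₂, UX.ClassLe c c₂ ∧ (c₂, d₂) ∈ R)

/-- One refinement step of the fixed-point algorithm deciding hd-bisimilarity. -/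
def refineStep (X Y : HDA) (S : Set (X.toPCSet.Cell × Y.toPCSet.Cell)) :
    Set (X.toPCSet.Cell × Y.toPCSet.Cell) :=
  { p | p ∈ S ∧ p.1.1 = p.2.1 ∧
    (∀ (n : ℕ) (x : X.cube (n + 1)) (y : Y.cube (n + 1)),
      p = (⟨n + 1, x⟩, ⟨n + 1, y⟩) →
      ∀ (ν : Bool) (k : Fin (n + 1)),
        ((⟨n, X.toPCSet.face ν k x⟩, ⟨n, Y.toPCSet.face ν k y⟩) : _ × _) ∈ S) ∧
    (∀ (n : ℕ) (x₁ : X.cube n) (y₁ : Y.cube n),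
      p = (⟨n, x₁⟩, ⟨n, y₁⟩) →
      (∀ (x₂ : X.cube (n + 1)) (k : Fin (n + 1)), x₁ = X.toPCSet.face false k x₂ →
        ∃ y₂ : Y.cube (n + 1), y₁ = Y.toPCSet.face false k y₂ ∧
          ((⟨n + 1, x₂⟩, ⟨n + 1, y₂⟩) : _ × _) ∈ S) ∧
      (∀ (y₂ : Y.cube (n + 1)) (k : Fin (n + 1)), y₁ = Y.toPCSet.face false k y₂ →
        ∃ x₂ : X.cube (n + 1), x₁ = X.toPCSet.face false k x₂ ∧
          ((⟨n + 1, x₂⟩, ⟨n + 1, y₂⟩) : _ × _) ∈ S)) }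


namespace PCSet

variable {X : PCSet}

lemma step_dim {x y : X.Cell} (h : X.Step x y) : y.1 = x.1 + 1 ∨ x.1 = y.1 + 1 := by
  rcases h with ⟨n, k, c, rfl, rfl⟩ | ⟨n, k, c, rfl, rfl⟩
  · left; rfl
  · right; rfl

lemma cell_ne {m n : ℕ} {a : X.cube m} {b : X.cube n} (h : m ≠ n) :
    (⟨m, a⟩ : X.Cell) ≠ ⟨n, b⟩ := fun he => h (congrArg Sigma.fst he)

lemma adjacent_replace (A B : List X.Cell) (a b b' c : X.Cell)
    (h₁ : X.IsCubePath (A ++ a :: b :: c :: B)) (s₁ : X.Step a b') (s₂ : X.Step b' c)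
    (hne : b ≠ b') (hadj : X.AdjMid a b b' c) :
    X.Adjacent (A ++ a :: b :: c :: B) (A ++ a :: b' :: c :: B) := by
  have hch := h₁.2
  unfold List.Chain' at hch
  rw [List.isChain_append, List.isChain_cons_cons, List.isChain_cons_cons] at hch
  obtain ⟨hA, ⟨hab, hbc, hcB⟩, hlink⟩ := hch
  have h₂ : X.IsCubePath (A ++ a :: b' :: c :: B) := by
    refine ⟨by simp, ?_⟩
    unfold List.Chain'
    rw [List.isChain_append, List.isChain_cons_cons, List.isChain_cons_cons]
    exact ⟨hA, ⟨s₁, s₂, hcB⟩, hlink⟩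
  have key : ∀ (L : List X.Cell) (k : ℕ), (A ++ L)[A.length + k]? = L[k]? := by
    intro L k
    rw [List.getElem?_append_right (by omega)]
    congr 1
    omega
  refine ⟨h₁, h₂, by simp, A.length + 1, Nat.succ_pos _, by simp; omega, ?_, ?_,
    a, b, b', c, ?_, ?_, ?_, ?_, hadj⟩
  · intro q hq
    rcases Nat.lt_or_ge q A.length with h | h
    · rw [List.getElem?_append, if_pos h, List.getElem?_append, if_pos h]
    · obtain ⟨k, rfl⟩ := Nat.exists_eq_add_of_le h
      rw [key, key]
      match k, (show k ≠ 1 by omega) with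
      | 0, _ => rfl
      | (k + 2), _ => rfl
  · have e1 : (A ++ a :: b :: c :: B)[A.length + 1]? = some b := key _ 1
    have e2 : (A ++ a :: b' :: c :: B)[A.length + 1]? = some b' := key _ 1
    rw [e1, e2]
    simp [hne]
  · simpa using key (a :: b :: c :: B) 0
  · exact key _ 1
  · exact key _ 1
  · have := key (a :: b :: c :: B) 2
    rw [show A.length + 1 + 1 = A.length + 2 by omega]
    simpa using this

end PCSet
namespace PCSet
variable {X : PCSet}

lemma homotopic_props {l₁ l₂ : List X.Cell} (h : X.Homotopic l₁ l₂) (h₁ : X.IsCubePath l₁) :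
    X.IsCubePath l₂ ∧ l₁.head? = l₂.head? ∧ l₁.getLast? = l₂.getLast? ∧
      l₁.length = l₂.length := by
  induction h with
  | refl => exact ⟨h₁, rfl, rfl, rfl⟩
  | @tail m l₂ _ hadj ih =>
    obtain ⟨hm, hh, hl, hlen⟩ := ih
    obtain ⟨_, hcp2, hlen2, p, hp0, hp1, heq, -⟩ := hadj
    refine ⟨hcp2, ?_, ?_, by omega⟩
    · rw [hh, List.head?_eq_getElem?, List.head?_eq_getElem?, heq 0 (by omega)]
    · rw [hl, List.getLast?_eq_getElem?, List.getLast?_eq_getElem?, ← hlen2,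
        heq _ (by omega)]

lemma cubePath_append_single {l : List X.Cell} {x : X.Cell} (h : X.IsCubePath l)
    (hs : ∀ z ∈ l.getLast?, X.Step z x) : X.IsCubePath (l ++ [x]) :=
  ⟨by simp, List.isChain_append.mpr ⟨h.2, List.isChain_singleton x, by
    intro z hz y hy
    simp only [List.head?_cons, Option.mem_def, Option.some.injEq] at hy
    subst hy
    exact hs z hz⟩⟩

lemma adjacent_append {l₁ l₂ : List X.Cell} (x : X.Cell) (h : X.Adjacent l₁ l₂)
    (hx : X.IsCubePath (l₁ ++ [x])) : X.Adjacent (l₁ ++ [x]) (l₂ ++ [x]) := by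
  obtain ⟨hc1, hc2, hlen, p, hp0, hp1, heq, hne, a, b, b', c, e1, e2, e3, e4, hadj⟩ := h
  have hlast : l₁.getLast? = l₂.getLast? := by
    rw [List.getLast?_eq_getElem?, List.getLast?_eq_getElem?, ← hlen, heq _ (by omega)]
  have hx2 : X.IsCubePath (l₂ ++ [x]) := by
    refine ⟨by simp, ?_⟩
    have h2 := hx.2
    unfold List.Chain' at h2 ⊢
    rw [List.isChain_append] at h2 ⊢
    exact ⟨hc2.2, h2.2.1, by rw [← hlast]; exact h2.2.2⟩
  refine ⟨hx, hx2, by simp [hlen], p, hp0, by simp; omega, ?_, ?_,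
    a, b, b', c, ?_, ?_, ?_, ?_, hadj⟩
  · intro q hq
    rcases Nat.lt_or_ge q l₁.length with hlt | hge
    · rw [List.getElem?_append, if_pos hlt, List.getElem?_append, if_pos (hlen ▸ hlt)]
      exact heq q hq
    · rw [List.getElem?_append_right hge, List.getElem?_append_right (hlen ▸ hge), hlen]
  · rw [List.getElem?_append, if_pos (by omega), List.getElem?_append,
      if_pos (by omega)]
    exact hne
  · rw [List.getElem?_append, if_pos (by omega)]; exact e1
  · rw [List.getElem?_append, if_pos (by omega)]; exact e2
  · rw [List.getElem?_append, if_pos (by omega)]; exact e3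
  · rw [List.getElem?_append, if_pos (by omega)]; exact e4

lemma homotopic_append {l₁ l₂ : List X.Cell} (x : X.Cell) (h : X.Homotopic l₁ l₂)
    (h₁ : X.IsCubePath l₁) (hs : ∀ z ∈ l₁.getLast?, X.Step z x) :
    X.Homotopic (l₁ ++ [x]) (l₂ ++ [x]) := by
  induction h with
  | refl => exact .refl
  | @tail m l₂ hm hadj ih =>
    have hprops := homotopic_props hm h₁
    refine .tail ih (adjacent_append x hadj (cubePath_append_single hprops.1 ?_))
    rw [← hprops.2.2.1]
    exact hs

lemma lowerChain_concat (n : ℕ) (x : X.cube n) (ks : ∀ j : Fin n, Fin (j.1 + 1)) :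
    ∃ T, X.lowerChain n x ks = T ++ [⟨n, x⟩] := by
  cases n with
  | zero => exact ⟨[], rfl⟩
  | succ n => exact ⟨_, rfl⟩

end PCSet
namespace PCSet
variable {X : PCSet}

lemma fix_move (d : ℕ) (u : X.cube (d + 2)) (l : Fin (d + 2)) (j : Fin (d + 1))
    (P B : List X.Cell)
    (h : X.IsCubePath (P ++ ⟨d, X.face false j (X.face false l u)⟩ ::
        ⟨d + 1, X.face false l u⟩ :: ⟨d + 2, u⟩ :: B)) :
    ∃ (l₂ : Fin (d + 2)) (j₂ : Fin (d + 1)), l₂.1 ≠ l.1 ∧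
      X.face false j (X.face false l u) = X.face false j₂ (X.face false l₂ u) ∧
      X.Homotopic (P ++ ⟨d, X.face false j (X.face false l u)⟩ ::
          ⟨d + 1, X.face false l u⟩ :: ⟨d + 2, u⟩ :: B)
        (P ++ ⟨d, X.face false j (X.face false l u)⟩ ::
          ⟨d + 1, X.face false l₂ u⟩ :: ⟨d + 2, u⟩ :: B) := by
  rcases Nat.lt_or_ge j.1 l.1 with hjl | hjl
  · -- new index j.1 < l.1
    refine ⟨⟨j.1, by omega⟩, ⟨l.1 - 1, by omega⟩, Nat.ne_of_lt hjl, ?_, ?_⟩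
    · exact X.precub false false j.1 l.1 j.2 l.2 hjl u
    · have he : X.face false j (X.face false l u) =
          X.face false (⟨l.1 - 1, by omega⟩ : Fin (d + 1))
            (X.face false (⟨j.1, by omega⟩ : Fin (d + 2)) u) :=
        X.precub false false j.1 l.1 j.2 l.2 hjl u
      by_cases hbb : (⟨d + 1, X.face false l u⟩ : X.Cell) =
          ⟨d + 1, X.face false (⟨j.1, by omega⟩ : Fin (d + 2)) u⟩
      · rw [← hbb]
        exact Relation.ReflTransGen.refl
      · refine Relation.ReflTransGen.single
          (adjacent_replace P B _ _ _ _ h ?_ ?_ hbb ?_)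
        · exact Or.inl ⟨d, ⟨l.1 - 1, by omega⟩, _,
            congrArg (fun w => (⟨d, w⟩ : X.Cell)) he, rfl⟩
        · exact Or.inl ⟨d + 1, ⟨j.1, by omega⟩, u, rfl, rfl⟩
        · exact Or.inl ⟨d, j.1, l.1, j.2, l.2, hjl, u, rfl, rfl, rfl, rfl,
            congrArg (fun w => (⟨d, w⟩ : X.Cell)) he⟩
  · -- new index j.1 + 1 > l.1
    have he : X.face false j (X.face false l u) =
        X.face false (⟨l.1, by omega⟩ : Fin (d + 1))
          (X.face false (⟨j.1 + 1, by omega⟩ : Fin (d + 2)) u) :=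
      (X.precub false false l.1 (j.1 + 1) (by omega) (by omega) (by omega) u).symm
    refine ⟨⟨j.1 + 1, by omega⟩, ⟨l.1, by omega⟩, show j.1 + 1 ≠ l.1 by omega, he, ?_⟩
    by_cases hbb : (⟨d + 1, X.face false l u⟩ : X.Cell) =
        ⟨d + 1, X.face false (⟨j.1 + 1, by omega⟩ : Fin (d + 2)) u⟩
    · rw [← hbb]
      exact Relation.ReflTransGen.refl
    · refine Relation.ReflTransGen.single
        (adjacent_replace P B _ _ _ _ h ?_ ?_ hbb ?_)
      · exact Or.inl ⟨d, ⟨l.1, by omega⟩, _,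
          congrArg (fun w => (⟨d, w⟩ : X.Cell)) he, rfl⟩
      · exact Or.inl ⟨d + 1, ⟨j.1 + 1, by omega⟩, u, rfl, rfl⟩
      · exact Or.inr (Or.inr (Or.inr (Or.inr (Or.inl
          ⟨d, l.1, j.1 + 1, by omega, by omega, by omega, u, rfl, rfl, rfl,
            congrArg (fun w => (⟨d, w⟩ : X.Cell)) he, rfl⟩))))

lemma push_move (d : ℕ) (u : X.cube (d + 2)) (l₂ κ : Fin (d + 2)) (hne : l₂.1 ≠ κ.1)
    (A B : List X.Cell)
    (h : X.IsCubePath (A ++ ⟨d + 1, X.face false l₂ u⟩ :: ⟨d + 2, u⟩ ::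
        ⟨d + 1, X.face true κ u⟩ :: B)) :
    ∃ m : Fin (d + 1),
      X.Adjacent (A ++ ⟨d + 1, X.face false l₂ u⟩ :: ⟨d + 2, u⟩ ::
          ⟨d + 1, X.face true κ u⟩ :: B)
        (A ++ ⟨d + 1, X.face false l₂ u⟩ ::
          ⟨d, X.face true m (X.face false l₂ u)⟩ :: ⟨d + 1, X.face true κ u⟩ :: B) := by
  rcases Nat.lt_or_ge κ.1 l₂.1 with hkl | hkl
  · -- κ < l₂ : Adj4
    refine ⟨⟨κ.1, by omega⟩, adjacent_replace A B _ _ _ _ h ?_ ?_ (cell_ne (by omega)).symm ?_⟩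
    · exact Or.inr ⟨d, ⟨κ.1, by omega⟩, X.face false l₂ u, rfl, rfl⟩
    · have he : X.face true (⟨κ.1, by omega⟩ : Fin (d + 1)) (X.face false l₂ u) =
          X.face false (⟨l₂.1 - 1, by omega⟩ : Fin (d + 1)) (X.face true κ u) :=
        X.precub true false κ.1 l₂.1 (by omega) l₂.2 hkl u
      exact Or.inl ⟨d, ⟨l₂.1 - 1, by omega⟩, _,
        congrArg (fun w => (⟨d, w⟩ : X.Cell)) he, rfl⟩
    · exact Or.inr (Or.inr (Or.inr (Or.inr (Or.inr (Or.inr (Or.inr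
        ⟨d, κ.1, l₂.1, by omega, l₂.2, hkl, u, rfl, rfl, rfl, rfl⟩))))))
  · -- l₂ < κ : Adj3
    have hlk : l₂.1 < κ.1 := by omega
    have he : X.face false (⟨l₂.1, by omega⟩ : Fin (d + 1)) (X.face true κ u) =
        X.face true (⟨κ.1 - 1, by omega⟩ : Fin (d + 1)) (X.face false l₂ u) :=
      X.precub false true l₂.1 κ.1 (by omega) κ.2 hlk u
    refine ⟨⟨κ.1 - 1, by omega⟩, adjacent_replace A B _ _ _ _ h ?_ ?_ (cell_ne (by omega)).symm ?_⟩
    · exact Or.inr ⟨d, ⟨κ.1 - 1, by omega⟩, X.face false l₂ u, rfl, rfl⟩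
    · exact Or.inl ⟨d, ⟨l₂.1, by omega⟩, _,
        congrArg (fun w => (⟨d, w⟩ : X.Cell)) he.symm, rfl⟩
    · exact Or.inr (Or.inr (Or.inr (Or.inr (Or.inr (Or.inr (Or.inl
        ⟨d, l₂.1, κ.1, by omega, κ.2, hlk, u, rfl,
          congrArg (fun w => (⟨d, w⟩ : X.Cell)) he.symm, rfl, rfl⟩))))))

end PCSet
namespace PCSet
variable {X : PCSet}

lemma lowerChain_succ_succ (d : ℕ) (x : X.cube (d + 2))
    (ks : ∀ j : Fin (d + 2), Fin (j.1 + 1)) :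
    X.lowerChain (d + 2) x ks =
      X.lowerChain d
          (X.face false (ks ⟨d, by omega⟩) (X.face false (ks ⟨d + 1, by omega⟩) x))
          (fun j => ks ⟨j.1, by omega⟩)
        ++ [⟨d + 1, X.face false (ks ⟨d + 1, by omega⟩) x⟩, ⟨d + 2, x⟩] := by
  have h1 : X.lowerChain (d + 2) x ks =
      X.lowerChain (d + 1) (X.face false (ks ⟨d + 1, by omega⟩) x)
        (fun j : Fin (d + 1) => ks ⟨j.1, by omega⟩) ++ [⟨d + 2, x⟩] := rfl
  have h2 : X.lowerChain (d + 1) (X.face false (ks ⟨d + 1, by omega⟩) x)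
        (fun j : Fin (d + 1) => ks ⟨j.1, by omega⟩) =
      X.lowerChain d
          (X.face false (ks ⟨d, by omega⟩) (X.face false (ks ⟨d + 1, by omega⟩) x))
          (fun j : Fin d => ks ⟨j.1, by omega⟩)
        ++ [⟨d + 1, X.face false (ks ⟨d + 1, by omega⟩) x⟩] := rfl
  rw [h1, h2, List.append_assoc]
  rfl

end PCSet
namespace PCSet
variable {X : PCSet}

lemma lowerChain_succ (n : ℕ) (x : X.cube (n + 1)) (ks : ∀ j : Fin (n + 1), Fin (j.1 + 1)) :
    X.lowerChain (n + 1) x ks =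
      X.lowerChain n (X.face false (ks ⟨n, by omega⟩) x) (fun j => ks ⟨j.1, by omega⟩)
        ++ [⟨n + 1, x⟩] := rfl

lemma pushAll_succ (d : ℕ)
    (IH : ∀ (u : X.cube (d + 1)) (ks : ∀ j : Fin (d + 1), Fin (j.1 + 1)) (κ : Fin (d + 1))
      (P B : List X.Cell),
      X.IsCubePath (P ++ X.lowerChain (d + 1) u ks ++ ⟨d, X.face true κ u⟩ :: B) →
      ∃ M : List X.Cell, M.map Sigma.fst = 0 :: 1 :: List.range' 0 d ∧
        X.Homotopic (P ++ X.lowerChain (d + 1) u ks ++ ⟨d, X.face true κ u⟩ :: B)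
          (P ++ M ++ ⟨d, X.face true κ u⟩ :: B))
    (u : X.cube (d + 2)) (lb : Fin (d + 2)) (l' : Fin (d + 1))
    (ks'' : ∀ j : Fin d, Fin (j.1 + 1)) (κ : Fin (d + 2)) (P B : List X.Cell)
    (h : X.IsCubePath (P ++ (X.lowerChain d (X.face false l' (X.face false lb u)) ks''
        ++ [⟨d + 1, X.face false lb u⟩, ⟨d + 2, u⟩]) ++ ⟨d + 1, X.face true κ u⟩ :: B)) :
    ∃ M : List X.Cell, M.map Sigma.fst = 0 :: 1 :: List.range' 0 (d + 1) ∧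
      X.Homotopic (P ++ (X.lowerChain d (X.face false l' (X.face false lb u)) ks''
          ++ [⟨d + 1, X.face false lb u⟩, ⟨d + 2, u⟩]) ++ ⟨d + 1, X.face true κ u⟩ :: B)
        (P ++ M ++ ⟨d + 1, X.face true κ u⟩ :: B) := by
  obtain ⟨T', hT'⟩ := lowerChain_concat d (X.face false l' (X.face false lb u)) ks''
  have hform : P ++ (X.lowerChain d (X.face false l' (X.face false lb u)) ks''
        ++ [⟨d + 1, X.face false lb u⟩, ⟨d + 2, u⟩]) ++ (⟨d + 1, X.face true κ u⟩ : X.Cell) :: B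
      = (P ++ T') ++ (⟨d, X.face false l' (X.face false lb u)⟩ : X.Cell) ::
          ⟨d + 1, X.face false lb u⟩ :: ⟨d + 2, u⟩ :: (⟨d + 1, X.face true κ u⟩ : X.Cell) :: B := by
    rw [hT']; simp
  rw [hform] at h ⊢
  -- Step 1: possibly change the index of the lower face below the peak
  obtain ⟨l₂, j₂, hl₂κ, he', hom₁⟩ :
      ∃ (l₂ : Fin (d + 2)) (j₂ : Fin (d + 1)), l₂.1 ≠ κ.1 ∧
        X.face false l' (X.face false lb u) = X.face false j₂ (X.face false l₂ u) ∧
        X.Homotopic ((P ++ T') ++ (⟨d, X.face false l' (X.face false lb u)⟩ : X.Cell) ::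
            ⟨d + 1, X.face false lb u⟩ :: ⟨d + 2, u⟩ :: (⟨d + 1, X.face true κ u⟩ : X.Cell) :: B)
          ((P ++ T') ++ (⟨d, X.face false l' (X.face false lb u)⟩ : X.Cell) ::
            ⟨d + 1, X.face false l₂ u⟩ :: ⟨d + 2, u⟩ :: (⟨d + 1, X.face true κ u⟩ : X.Cell) :: B) := by
    by_cases hcase : lb.1 = κ.1
    · obtain ⟨l₂, j₂, hne, heq, hom⟩ := fix_move d u lb l' (P ++ T')
        ((⟨d + 1, X.face true κ u⟩ : X.Cell) :: B) h
      exact ⟨l₂, j₂, by omega, heq, hom⟩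
    · exact ⟨lb, l', hcase, rfl, Relation.ReflTransGen.refl⟩
  have hcp₂ := (homotopic_props hom₁ h).1
  have hform₂ : (P ++ T') ++ (⟨d, X.face false l' (X.face false lb u)⟩ : X.Cell) ::
        ⟨d + 1, X.face false l₂ u⟩ :: ⟨d + 2, u⟩ :: (⟨d + 1, X.face true κ u⟩ : X.Cell) :: B
      = ((P ++ T') ++ [(⟨d, X.face false l' (X.face false lb u)⟩ : X.Cell)])
          ++ (⟨d + 1, X.face false l₂ u⟩ : X.Cell) :: ⟨d + 2, u⟩ ::
            (⟨d + 1, X.face true κ u⟩ : X.Cell) :: B := by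
    simp
  rw [hform₂] at hcp₂ hom₁
  -- Step 2: replace the peak by a valley
  obtain ⟨m, hadj⟩ := push_move d u l₂ κ hl₂κ
    ((P ++ T') ++ [(⟨d, X.face false l' (X.face false lb u)⟩ : X.Cell)]) B hcp₂
  have hom₂ := Relation.ReflTransGen.single hadj
  have hcp₃ := hadj.2.1
  -- Step 3: recognize a lowerChain of the lower-dimensional cube
  have hks₂ : ∃ ks₂ : ∀ j : Fin (d + 1), Fin (j.1 + 1),
      X.lowerChain (d + 1) (X.face false l₂ u) ks₂ =
        X.lowerChain d (X.face false l' (X.face false lb u)) ks''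
          ++ [⟨d + 1, X.face false l₂ u⟩] := by
    refine ⟨Fin.lastCases j₂ ks'', ?_⟩
    rw [lowerChain_succ]
    have c1 : Fin.lastCases (motive := fun j : Fin (d + 1) => Fin (j.1 + 1)) j₂ ks''
        ⟨d, by omega⟩ = j₂ := by
      show Fin.lastCases (motive := fun j : Fin (d + 1) => Fin (j.1 + 1)) j₂ ks''
        (Fin.last d) = j₂
      simp
    have c2 : (fun jj : Fin d =>
          Fin.lastCases (motive := fun j : Fin (d + 1) => Fin (j.1 + 1)) j₂ ks''
            ⟨jj.1, by omega⟩) = ks'' := by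
      funext jj
      show Fin.lastCases (motive := fun j : Fin (d + 1) => Fin (j.1 + 1)) j₂ ks''
        jj.castSucc = ks'' jj
      simp
    rw [c1, c2, ← he']
  obtain ⟨ks₂, hks₂⟩ := hks₂
  have hform₃ : ((P ++ T') ++ [(⟨d, X.face false l' (X.face false lb u)⟩ : X.Cell)])
        ++ (⟨d + 1, X.face false l₂ u⟩ : X.Cell) ::
          (⟨d, X.face true m (X.face false l₂ u)⟩ : X.Cell) ::
          (⟨d + 1, X.face true κ u⟩ : X.Cell) :: B
      = P ++ X.lowerChain (d + 1) (X.face false l₂ u) ks₂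
          ++ (⟨d, X.face true m (X.face false l₂ u)⟩ : X.Cell) ::
            ((⟨d + 1, X.face true κ u⟩ : X.Cell) :: B) := by
    rw [hks₂, hT']; simp
  rw [hform₃] at hom₂ hcp₃
  -- Step 4: induction hypothesis
  obtain ⟨M', hM', hom₃⟩ := IH (X.face false l₂ u) ks₂ m P
    ((⟨d + 1, X.face true κ u⟩ : X.Cell) :: B) hcp₃
  refine ⟨M' ++ [(⟨d, X.face true m (X.face false l₂ u)⟩ : X.Cell)], ?_, ?_⟩
  · rw [List.map_append, hM']
    simp [List.range'_concat]
  · refine hom₁.trans (hom₂.trans (hom₃.trans ?_))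
    rw [show P ++ M' ++ (⟨d, X.face true m (X.face false l₂ u)⟩ : X.Cell) ::
          ((⟨d + 1, X.face true κ u⟩ : X.Cell) :: B)
        = P ++ (M' ++ [(⟨d, X.face true m (X.face false l₂ u)⟩ : X.Cell)])
          ++ (⟨d + 1, X.face true κ u⟩ : X.Cell) :: B by simp]

lemma pushAll (d : ℕ) :
    ∀ (u : X.cube (d + 1)) (ks : ∀ j : Fin (d + 1), Fin (j.1 + 1)) (κ : Fin (d + 1))
      (P B : List X.Cell),
      X.IsCubePath (P ++ X.lowerChain (d + 1) u ks ++ ⟨d, X.face true κ u⟩ :: B) →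
      ∃ M : List X.Cell, M.map Sigma.fst = 0 :: 1 :: List.range' 0 d ∧
        X.Homotopic (P ++ X.lowerChain (d + 1) u ks ++ ⟨d, X.face true κ u⟩ :: B)
          (P ++ M ++ ⟨d, X.face true κ u⟩ :: B) := by
  induction d with
  | zero =>
    intro u ks κ P B _
    exact ⟨X.lowerChain 1 u ks, rfl, Relation.ReflTransGen.refl⟩
  | succ d IH =>
    intro u ks κ P B h
    rw [lowerChain_succ_succ] at h ⊢
    exact pushAll_succ d IH u (ks ⟨d + 1, by omega⟩) (ks ⟨d, by omega⟩)
      (fun j => ks ⟨j.1, by omega⟩) κ P B h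

end PCSet
namespace PCSet
variable {X : PCSet}

lemma chain'_step (f : List X.Cell) (hch : List.Chain' X.Step f) (i : ℕ)
    (hi : i + 1 < f.length) : X.Step (f.get ⟨i, by omega⟩) (f.get ⟨i + 1, hi⟩) := by
  exact List.isChain_iff_getElem.mp hch i (by omega)

lemma dim_parity (f : List X.Cell) (hch : List.Chain' X.Step f) (h0 : 0 < f.length) :
    ∀ i (hi : i < f.length), (f.get ⟨i, hi⟩).1 % 2 = ((f.get ⟨0, h0⟩).1 + i) % 2 := by
  intro i
  induction i with
  | zero => intro _; omega
  | succ i ih =>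
    intro hi
    have hstep := chain'_step f hch i hi
    have := ih (by omega)
    rcases step_dim hstep with h | h <;> omega

lemma asc_lowerChain : ∀ (n : ℕ) (A : List X.Cell) (x : X.cube n),
    List.Chain' X.Step (A ++ [⟨n, x⟩]) → A.map Sigma.fst = List.range n →
    ∃ ks, A ++ [⟨n, x⟩] = X.lowerChain n x ks := by
  intro n
  induction n with
  | zero =>
    intro A x _ hA
    have hA' : A = [] := by simpa using hA
    subst hA'
    exact ⟨fun j => j.elim0, rfl⟩
  | succ n IH =>
    intro A x hch hA
    obtain ⟨A', e, rfl⟩ : ∃ A' e, A = A' ++ [e] := by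
      rcases List.eq_nil_or_concat A with rfl | ⟨A', e, hAe⟩
      · exact absurd hA.symm (by simp [List.range_succ])
      · exact ⟨A', e, by simpa using hAe⟩
    rw [List.map_append, List.range_succ] at hA
    obtain ⟨hA', he1⟩ := List.append_inj' hA (by simp)
    have he1 : e.1 = n := by simpa using he1
    have hst : X.Step e ⟨n + 1, x⟩ := by
      unfold List.Chain' at hch
      rw [List.append_assoc, List.isChain_append] at hch
      have h2 := hch.2.1
      exact (List.isChain_pair.mp h2)
    rcases hst with ⟨nn, k, c, he, hx⟩ | ⟨nn, k, c, he, hx⟩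
    · injection hx with h1 h2
      obtain rfl : n = nn := by omega
      obtain rfl : x = c := eq_of_heq h2
      subst he
      have hch' : List.Chain' X.Step (A' ++ [(⟨n, X.face false k x⟩ : X.Cell)]) := by
        rw [List.append_assoc] at hch
        unfold List.Chain' at hch ⊢
        rw [List.isChain_append] at hch
        rw [List.isChain_append] at hch ⊢
        exact ⟨hch.1, by simp, fun z hz y hy => hch.2.2 z hz y (by simpa using hy)⟩
      obtain ⟨ks', hks'⟩ := IH A' (X.face false k x) hch' hA'
      refine ⟨Fin.lastCases k ks', ?_⟩
      rw [lowerChain_succ]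
      have c1 : Fin.lastCases (motive := fun j : Fin (n + 1) => Fin (j.1 + 1)) k ks'
          ⟨n, by omega⟩ = k := by
        show Fin.lastCases (motive := fun j : Fin (n + 1) => Fin (j.1 + 1)) k ks'
          (Fin.last n) = k
        simp
      have c2 : (fun jj : Fin n =>
            Fin.lastCases (motive := fun j : Fin (n + 1) => Fin (j.1 + 1)) k ks'
              ⟨jj.1, by omega⟩) = ks' := by
        funext jj
        show Fin.lastCases (motive := fun j : Fin (n + 1) => Fin (j.1 + 1)) k ks'
          jj.castSucc = ks' jj
        simp
      rw [c1, c2, ← hks']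
    · exfalso
      injection hx with h1 _
      rw [he] at he1
      simp at he1
      omega
end PCSet
namespace PCSet
variable {X : PCSet}

lemma fan_append_up (f : List X.Cell) (m : ℕ) (c : X.cube m) (xd : ℕ) (xc : X.cube xd)
    (hfan : IsFan X f) (hlast : f.getLast? = some ⟨m, c⟩) (hdim : xd = m + 1) :
    IsFan X (f ++ [(⟨xd, xc⟩ : X.Cell)]) := by
  subst hdim
  obtain ⟨n0, c0, hl0, hcond⟩ := hfan
  have hn0 : m = n0 := by
    rw [hl0] at hlast
    exact (congrArg Sigma.fst (Option.some.inj hlast)).symm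
  subst hn0
  refine ⟨m + 1, xc, by rw [List.getLast?_concat], ?_⟩
  intro i hi
  have hlen : (f ++ [(⟨m + 1, xc⟩ : X.Cell)]).length = f.length + 1 := by simp
  by_cases hif : i < f.length
  · have hget : (f ++ [(⟨m + 1, xc⟩ : X.Cell)]).get ⟨i, hi⟩ = f.get ⟨i, hif⟩ :=
      List.getElem_append_left hif
    constructor
    · intro hle
      rw [hget]
      exact (hcond i hif).1 (by omega)
    · intro hgt
      rw [hget, (hcond i hif).2 (by omega)]
      omega
  · have hi' : i = f.length := by
      rw [hlen] at hi
      omega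
    have hget : (f ++ [(⟨m + 1, xc⟩ : X.Cell)]).get ⟨i, hi⟩ = ⟨m + 1, xc⟩ :=
      List.getElem_concat_length hi' hi
    constructor
    · intro hle
      rw [hlen] at hle
      omega
    · intro _
      rw [hget, hlen]
      simp
      omega

lemma fan_down (P M : List X.Cell) (d : ℕ) (xc : X.cube d)
    (hM : M.map Sigma.fst = 0 :: 1 :: List.range' 0 d)
    (hP : ∀ i (hi : i < P.length), (P.get ⟨i, hi⟩).1 = if i % 2 = 0 then 0 else 1)
    (hPe : P.length % 2 = 0) :
    IsFan X (P ++ M ++ [(⟨d, xc⟩ : X.Cell)]) := by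
  have hMlen : M.length = d + 2 := by
    have := congrArg List.length hM
    simpa using this
  have hMdim : ∀ j (hj : j < M.length), (M.get ⟨j, hj⟩).1 =
      if j = 0 then 0 else if j = 1 then 1 else j - 2 := by
    intro j hj
    have h1 : (M.get ⟨j, hj⟩).1 = (M.map Sigma.fst)[j]'(by simpa using hj) := by
      simp
    have h2 : (M.map Sigma.fst)[j]'(by simpa using hj)
        = (0 :: 1 :: List.range' 0 d)[j]'(by rw [← hM]; simpa using hj) :=
      List.getElem_of_eq hM _
    rw [h1, h2]
    match j, hj with
    | 0, _ => rfl
    | 1, _ => rfl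
    | (j + 2), hj =>
      simp only [List.getElem_cons_succ]
      rw [List.getElem_range' (by rw [hMlen] at hj; simpa using (by omega : j < d))]
      simp
  refine ⟨d, xc, by rw [List.getLast?_concat], ?_⟩
  intro i hi
  have hlen : (P ++ M ++ [(⟨d, xc⟩ : X.Cell)]).length = P.length + d + 3 := by
    simp [hMlen]
    omega
  by_cases hiP : i < P.length
  · have hget : (P ++ M ++ [(⟨d, xc⟩ : X.Cell)]).get ⟨i, hi⟩ = P.get ⟨i, hiP⟩ :=
      (List.getElem_append_left (by simp; omega)).trans (List.getElem_append_left hiP)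
    constructor
    · intro _
      rw [hget]
      exact hP i hiP
    · intro hgt
      rw [hlen] at hgt
      omega
  · by_cases hiM : i < P.length + M.length
    · have hget : (P ++ M ++ [(⟨d, xc⟩ : X.Cell)]).get ⟨i, hi⟩
          = M.get ⟨i - P.length, by omega⟩ := by
        refine (List.getElem_append_left (by simp; omega)).trans ?_
        exact List.getElem_append_right (by omega)
      rw [hget, hMdim (i - P.length) (by omega)]
      constructor
      · intro hle
        rw [hlen] at hle
        rcases (show i - P.length = 0 ∨ i - P.length = 1 ∨ i - P.length = 2 by omega)
          with h | h | h
        · have h2 : i % 2 = 0 := by omega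
          rw [h]
          simp [h2]
        · have h2 : ¬ (i % 2 = 0) := by omega
          rw [h]
          simp [h2]
        · have h2 : i % 2 = 0 := by omega
          rw [h]
          simp [h2]
      · intro hgt
        rw [hlen] at hgt ⊢
        have h0 : ¬ (i - P.length = 0) := by omega
        have h1 : ¬ (i - P.length = 1) := by omega
        simp only [h0, h1, if_false]
        omega
    · have hieq : i = P.length + M.length := by
        rw [hlen] at hi
        rw [hMlen] at hiM ⊢
        omega
      have hget : (P ++ M ++ [(⟨d, xc⟩ : X.Cell)]).get ⟨i, hi⟩ = ⟨d, xc⟩ :=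
        List.getElem_concat_length (by simp [hieq]) hi
      rw [hget]
      constructor
      · intro hle
        rw [hlen] at hle
        have h2 : i % 2 = 0 := by
          rw [hieq, hMlen]
          omega
        simp only [h2, if_pos rfl]
        show d = 0
        rw [hMlen] at hieq
        omega
      · intro _
        rw [hlen]
        show d = d + i + 1 - (P.length + d + 3)
        rw [hieq, hMlen]
        omega

end PCSet

/-- Lemma 4.6: any pointed cube path in a higher-dimensional automaton is
homotopic to a fan-shaped one. -/
theorem pointed_path_homotopic_fan (X : HDA) (l : List X.toPCSet.Cell)
    (h : X.IsPointedPath l) :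
    ∃ l' : List X.toPCSet.Cell, X.IsPointedPath l' ∧ IsFan X.toPCSet l' ∧
      X.toPCSet.Homotopic l l' := by
  induction l using List.reverseRecOn with
  | nil => exact absurd h.2 (by simp)
  | append_singleton l' x ih =>
    rcases eq_or_ne l' [] with rfl | hne
    · have hx : x = ⟨0, X.base⟩ := by
        have := h.2
        simpa using this
      subst hx
      refine ⟨[] ++ [(⟨0, X.base⟩ : X.toPCSet.Cell)], h, ?_, Relation.ReflTransGen.refl⟩
      refine ⟨0, X.base, by simp, ?_⟩
      intro i hi
      have hi0 : i = 0 := by simpa using hi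
      subst hi0
      constructor
      · intro _
        rfl
      · intro hgt
        simp at hgt
    · -- inductive case
      have hcp : X.toPCSet.IsCubePath (l' ++ [x]) := h.1
      have hch := hcp.2
      have hl'cp : X.toPCSet.IsCubePath l' := ⟨hne, (List.isChain_append.mp hch).1⟩
      have hl'head : l'.head? = some ⟨0, X.base⟩ := by
        rw [← List.head?_append_of_ne_nil l' (l₂ := [x]) hne]
        exact h.2
      obtain ⟨f, hfpp, hffan, hfhom⟩ := ih ⟨hl'cp, hl'head⟩
      have hprops := homotopic_props hfhom hl'cp
      have hstep : ∀ z ∈ l'.getLast?, X.toPCSet.Step z x := by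
        have hlink := (List.isChain_append.mp hch).2.2
        intro z hz
        exact hlink z hz x (by simp)
      have homapp : X.toPCSet.Homotopic (l' ++ [x]) (f ++ [x]) :=
        homotopic_append x hfhom hl'cp hstep
      have hfne : f ≠ [] := hprops.1.1
      obtain ⟨m, u, hflast, hfcond⟩ := hffan
      have hstep2 : X.toPCSet.Step ⟨m, u⟩ x := by
        have hlx : l'.getLast? = some ⟨m, u⟩ := by
          rw [hprops.2.2.1]
          exact hflast
        exact hstep _ hlx
      have hfhd : f.head? = some ⟨0, X.base⟩ := by
        rw [← hprops.2.1]
        exact hl'head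
      rcases hstep2 with ⟨n, k, c, hmu, hx⟩ | ⟨n, k, c, hmu, hx⟩
      · -- last step goes up in dimension: just append
        subst hx
        have hmn : m = n := congrArg Sigma.fst hmu
        refine ⟨f ++ [(⟨n + 1, c⟩ : X.toPCSet.Cell)], ⟨?_, ?_⟩, ?_, homapp⟩
        · exact cubePath_append_single hprops.1
            (by rw [← hprops.2.2.1]; exact fun z hz => hstep z hz)
        · rw [List.head?_append_of_ne_nil f hfne]
          exact hfhd
        · exact fan_append_up f m u (n + 1) c ⟨m, u, hflast, hfcond⟩ hflast (by omega)
      · -- last step goes down in dimension: push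
        subst hx
        have hmn : m = n + 1 := congrArg Sigma.fst hmu
        subst hmn
        injection hmu with _ h2
        obtain rfl := h2
        have hch' : List.Chain' X.toPCSet.Step f := hprops.1.2
        have h0 : 0 < f.length := List.length_pos_iff.mpr hfne
        have hf0 : (f.get ⟨0, h0⟩).1 = 0 := by
          have e1 : f[0]? = some (f.get ⟨0, h0⟩) := List.getElem?_eq_getElem h0
          rw [List.head?_eq_getElem?, e1] at hfhd
          rw [Option.some.inj hfhd]
        have hflen : n + 2 ≤ f.length := by
          by_contra hlt
          push_neg at hlt
          have hc2 := (hfcond 0 h0).2 (by omega)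
          rw [hf0] at hc2
          omega
        obtain ⟨p, hp⟩ : ∃ p, f.length = p + (n + 2) := ⟨f.length - (n + 2), by omega⟩
        have hPlen : (f.take p).length = p := by
          simp
          omega
        have hdecomp : f.take p ++ f.drop p = f := List.take_append_drop p f
        have hRlen : (f.drop p).length = n + 2 := by
          simp
          omega
        obtain ⟨A, z, hAz⟩ : ∃ A z, f.drop p = A ++ [z] := by
          rcases List.eq_nil_or_concat (f.drop p) with hnil | ⟨A, z, hAz⟩
          · rw [hnil] at hRlen
            simp at hRlen
          · exact ⟨A, z, by simpa using hAz⟩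
        have hzu : z = ⟨n + 1, u⟩ := by
          have e1 : f.getLast? = (f.drop p).getLast? := by
            conv_lhs => rw [← hdecomp]
            exact List.getLast?_append_of_ne_nil _ (by rw [hAz]; simp)
          rw [e1, hAz, List.getLast?_concat] at hflast
          exact Option.some.inj hflast
        subst hzu
        have hAlen : A.length = n + 1 := by
          rw [hAz] at hRlen
          simpa using hRlen
        have hpar := dim_parity f hch' h0
        have hPeven : p % 2 = 0 := by
          have h1 := hpar (p + 1) (by omega)
          have h3 := (hfcond (p + 1) (by omega)).2 (by omega)
          rw [h3, hf0] at h1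
          omega
        -- the ascending part is a lowerChain
        have hAmap : A.map Sigma.fst = List.range (n + 1) := by
          apply List.ext_getElem (by simp [hAlen])
          intro j h1 h2
          rw [List.getElem_map, List.getElem_range]
          have hj : j < n + 1 := by simpa [hAlen] using (by simpa using h1 : j < A.length)
          have hgj : A[j]'(by simpa using h1) = f.get ⟨p + j, by omega⟩ := by
            have e1 : (f.drop p)[j]'(by omega) = f[p + j]'(by omega) :=
              List.getElem_drop
            have e2 : (f.drop p)[j]'(by omega)
                = (A ++ [(⟨n + 1, u⟩ : X.toPCSet.Cell)])[j]'(by rw [← hAz]; omega) :=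
              List.getElem_of_eq hAz _
            have e3 : (A ++ [(⟨n + 1, u⟩ : X.toPCSet.Cell)])[j]'(by rw [← hAz]; omega)
                = A[j]'(by simpa using h1) :=
              List.getElem_append_left (by omega)
            rw [← e3, ← e2, e1]
            rfl
          rw [hgj]
          rcases Nat.eq_zero_or_pos j with rfl | hj1
          · have hc1 := (hfcond (p + 0) (by omega)).1 (by omega)
            rw [hc1]
            simp [hPeven]
          · have hc2 := (hfcond (p + j) (by omega)).2 (by omega)
            rw [hc2]
            omega
        have hchR : List.Chain' X.toPCSet.Step (A ++ [(⟨n + 1, u⟩ : X.toPCSet.Cell)]) := by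
          have hcf := hch'
          rw [← hdecomp, hAz] at hcf
          exact (List.isChain_append.mp hcf).2.1
        obtain ⟨ks, hks⟩ := asc_lowerChain (n + 1) A u hchR hAmap
        have hshape : f ++ [(⟨n, X.toPCSet.face true k u⟩ : X.toPCSet.Cell)]
            = f.take p ++ X.toPCSet.lowerChain (n + 1) u ks
              ++ (⟨n, X.toPCSet.face true k u⟩ : X.toPCSet.Cell) :: [] := by
          conv_lhs => rw [← hdecomp, hAz, hks]
        have hcpfx : X.toPCSet.IsCubePath
            (f ++ [(⟨n, X.toPCSet.face true k u⟩ : X.toPCSet.Cell)]) :=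
          (homotopic_props homapp hcp).1
        rw [hshape] at hcpfx
        obtain ⟨M, hMdim, hMhom⟩ := pushAll n u ks k (f.take p) [] hcpfx
        have htotal : X.toPCSet.Homotopic
            (l' ++ [(⟨n, X.toPCSet.face true k u⟩ : X.toPCSet.Cell)])
            (f.take p ++ M ++ [(⟨n, X.toPCSet.face true k u⟩ : X.toPCSet.Cell)]) := by
          refine Relation.ReflTransGen.trans homapp ?_
          rw [hshape]
          exact hMhom
        have hfinal := homotopic_props htotal hcp
        refine ⟨f.take p ++ M ++ [(⟨n, X.toPCSet.face true k u⟩ : X.toPCSet.Cell)],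
          ⟨hfinal.1, ?_⟩, ?_, htotal⟩
        · rw [← hfinal.2.1]
          exact h.2
        · refine fan_down (f.take p) M n (X.toPCSet.face true k u) hMdim ?_ ?_
          · intro i hi
            have hip : i < p := by
              rw [hPlen] at hi
              exact hi
            have hg : (f.take p).get ⟨i, hi⟩ = f.get ⟨i, by omega⟩ := List.getElem_take
            rw [hg]
            exact (hfcond i (by omega)).1 (by omega)
          · rw [hPlen]
            exact hPeven
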